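/- arXiv:1109.1349 — 2 statements merged into one kernel-verified Lean document; each statement's English description precedes it below -/
import Mathlib

section
/- Let ρ_AB be a density operator on H_A ⊗ H_B with dim H_B = N. If rank ρ_AB < N and ρ_B = Tr_A ρ_AB has rank N, then ρ_AB is entangled (not separable). -/
open Matrix
open scoped ComplexOrder

/-- Partial trace over the first (A) factor. -/
noncomputable def ptraceA {a b : Type*} [Fintype a] [Fintype b]
    (ρ : Matrix (a × b) (a × b) ℂ) : Matrix b b ℂ :=
  fun j l => ∑ i : a, ρ (i, j) (i, l)

/-- The rank-one product projector |u⟩⟨u| ⊗ |v⟩⟨v|. -/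
noncomputable def prodProj {a b : Type*} (u : a → ℂ) (v : b → ℂ) :
    Matrix (a × b) (a × b) ℂ :=
  fun x y => (u x.1 * v x.2) * star (u y.1 * v y.2)

/-- ρ_AB is separable: a finite convex combination of pure product states. -/
def SeparableState {a b : Type*} [Fintype a] [Fintype b]
    (ρ : Matrix (a × b) (a × b) ℂ) : Prop :=
  ∃ (n : ℕ) (p : Fin n → ℝ) (u : Fin n → a → ℂ) (v : Fin n → b → ℂ),
    (∀ i, 0 ≤ p i) ∧ (∑ i, p i = 1) ∧
    (∀ i, ∑ x, Complex.normSq (u i x) = 1) ∧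
    (∀ i, ∑ x, Complex.normSq (v i x) = 1) ∧
    ρ = ∑ i, (p i : ℂ) • prodProj (u i) (v i)

open Submodule Module

private lemma tensor_span_rank_le {a b ι : Type*} [Fintype a] [Fintype b]
    (U : ι → a → ℂ) (V : ι → b → ℂ) (hU : ∀ i, U i ≠ 0) :
    finrank ℂ (span ℂ (Set.range V)) ≤
      finrank ℂ (span ℂ (Set.range (fun i (x : a × b) => U i x.1 * V i x.2))) := by
  classical
  obtain ⟨s, hs_sub, hs_span, hs_li⟩ := exists_linearIndependent ℂ (Set.range V)
  have hfin : s.Finite := hs_li.setFinite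
  haveI := hfin.fintype
  have hchoice : ∀ e : s, ∃ i, V i = (e : b → ℂ) := fun e => hs_sub e.2
  choose f hf using hchoice
  set W : ι → (a × b) → ℂ := fun i x => U i x.1 * V i x.2 with hW
  set P := span ℂ (Set.range W) with hP
  have hGmem : ∀ e : s, W (f e) ∈ P := fun e => subset_span ⟨f e, rfl⟩
  have hGli : LinearIndependent ℂ (fun e : s => W (f e)) := by
    rw [Fintype.linearIndependent_iff]
    intro g hg e
    have key : ∀ x₀ : a, ∀ e : s, g e * U (f e) x₀ = 0 := by
      intro x₀
      have h2 : ∑ e : s, (g e * U (f e) x₀) • ((e : b → ℂ)) = 0 := by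
        funext y
        have h0 := congrFun hg (x₀, y)
        simp only [Finset.sum_apply, Pi.smul_apply, smul_eq_mul, Pi.zero_apply, hW] at h0 ⊢
        rw [← h0]
        refine Finset.sum_congr rfl fun e _ => ?_
        rw [hf e]
        ring
      exact fun e => Fintype.linearIndependent_iff.mp hs_li _ h2 e
    by_contra hge
    apply hU (f e)
    funext x₀
    rcases mul_eq_zero.mp (key x₀ e) with h | h
    · exact absurd h hge
    · exact h
  have hcard : finrank ℂ (span ℂ (Set.range V)) = Fintype.card s := by
    rw [← hs_span, finrank_span_set_eq_card hs_li, Set.toFinset_card]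
  rw [hcard]
  have hGli' : LinearIndependent ℂ (fun e : s => (⟨W (f e), hGmem e⟩ : P)) := by
    apply LinearIndependent.of_comp P.subtype
    exact hGli
  exact hGli'.fintype_card_le_finrank

/-- If rank ρ_AB < dim H_B while the B-marginal has full rank N = dim H_B,
then ρ_AB is entangled (not separable). -/
theorem low_rank_full_marginal_entangled {a b : Type*} [Fintype a] [Fintype b]
    [DecidableEq a] [DecidableEq b]
    (ρ : Matrix (a × b) (a × b) ℂ) (hρ : ρ.PosSemidef) (htr : ρ.trace = 1)
    (hrank : ρ.rank < Fintype.card b)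
    (hB : (ptraceA ρ).rank = Fintype.card b) :
    ¬ SeparableState ρ := by
  classical
  rintro ⟨n, p, u, v, hp, -, hu, -, hρeq⟩
  set W : Fin n → (a × b) → ℂ := fun i x => star (u i x.1) * star (v i x.2) with hWdef
  set S := {i : Fin n // p i ≠ 0} with hSdef
  set WS : S → (a × b) → ℂ := fun i => W i.1 with hWSdef
  set VS : S → b → ℂ := fun i => star (v i.1) with hVSdef
  -- normalization facts
  have hnorm : ∀ i, ∑ x, u i x * star (u i x) = 1 := by
    intro i
    simp only [Complex.star_def, Complex.mul_conj]
    rw [← Complex.ofReal_sum, hu i, Complex.ofReal_one]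
  have hu0 : ∀ i : S, (fun x => star (u i.1 x)) ≠ (0 : a → ℂ) := by
    intro i h
    have h1 : ∀ x, u i.1 x = 0 := by
      intro x
      have := congrFun h x
      simpa using this
    have := hu i.1
    simp [h1] at this
  -- Step A : compute the partial trace
  have hB_eq : ptraceA ρ = fun j l => ∑ i, (p i : ℂ) * (v i j * star (v i l)) := by
    funext j l
    simp only [ptraceA, hρeq, Matrix.sum_apply, Matrix.smul_apply, prodProj, smul_eq_mul]
    rw [Finset.sum_comm]
    refine Finset.sum_congr rfl fun i _ => ?_
    have h1 : ∀ x : a, (p i : ℂ) * ((u i x * v i j) * star (u i x * v i l)) =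
        ((p i : ℂ) * (v i j * star (v i l))) * (u i x * star (u i x)) := by
      intro x; rw [star_mul']; ring
    simp_rw [h1]
    rw [← Finset.mul_sum, hnorm i, mul_one]
  -- Step B : rank (ptraceA ρ) ≤ finrank span (range VS)
  have hrank_B_le : (ptraceA ρ).rank ≤ finrank ℂ (span ℂ (Set.range VS)) := by
    have hmem : LinearMap.range ((ptraceA ρ)ᵀ.mulVecLin) ≤ span ℂ (Set.range VS) := by
      rintro _ ⟨x, rfl⟩
      rw [Matrix.mulVecLin_apply]
      have hmv : (ptraceA ρ)ᵀ *ᵥ x =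
          ∑ i, ((p i : ℂ) * (∑ l, v i l * x l)) • (fun j => star (v i j)) := by
        funext j
        simp only [Matrix.mulVec, dotProduct, Matrix.transpose_apply, hB_eq, Matrix.transpose, Matrix.of_apply,
          Finset.sum_apply, Pi.smul_apply, smul_eq_mul]
        simp_rw [Finset.mul_sum, Finset.sum_mul]
        rw [Finset.sum_comm]
        exact Finset.sum_congr rfl fun i _ => Finset.sum_congr rfl fun l _ => by ring
      rw [hmv]
      refine Submodule.sum_mem _ fun i _ => ?_
      by_cases hpi : p i = 0
      · simp [hpi]
      · exact Submodule.smul_mem _ _ (subset_span ⟨⟨i, hpi⟩, rfl⟩)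
    calc (ptraceA ρ).rank = (ptraceA ρ)ᵀ.rank := (Matrix.rank_transpose _).symm
      _ ≤ finrank ℂ (span ℂ (Set.range VS)) := Submodule.finrank_mono hmem
  -- Step C : finrank span (range WS) ≤ ρ.rank
  have hrank_ρ_ge : finrank ℂ (span ℂ (Set.range WS)) ≤ ρ.rank := by
    set M : Matrix S (a × b) ℂ := Matrix.of WS with hMdef
    have hρ_apply : ∀ z y, ρ z y = ∑ i, (p i : ℂ) * (star (W i z) * W i y) := by
      intro z y
      rw [hρeq]
      simp only [Matrix.sum_apply, Matrix.smul_apply, prodProj, smul_eq_mul, hWdef]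
      refine Finset.sum_congr rfl fun i _ => ?_
      simp only [star_mul', star_star]
    have hker : LinearMap.ker ρ.mulVecLin ≤ LinearMap.ker M.mulVecLin := by
      intro x hx
      rw [LinearMap.mem_ker, Matrix.mulVecLin_apply] at hx ⊢
      set q : Fin n → ℂ := fun i => ∑ y, W i y * x y with hqdef
      have hstarq : ∀ i, star (q i) = ∑ z, star (W i z) * star (x z) := by
        intro i; simp [hqdef, star_sum]
      have h4 : ∀ z, (ρ *ᵥ x) z = ∑ i, (p i : ℂ) * star (W i z) * q i := by
        intro z
        simp only [Matrix.mulVec, dotProduct, hρ_apply, hqdef]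
        simp_rw [Finset.sum_mul]
        rw [Finset.sum_comm]
        refine Finset.sum_congr rfl fun i _ => ?_
        rw [Finset.mul_sum]
        exact Finset.sum_congr rfl fun y _ => by ring
      have key : ∑ i, (p i : ℂ) * (star (q i) * q i) = 0 := by
        have h0 : star x ⬝ᵥ (ρ *ᵥ x) = 0 := by rw [hx, dotProduct_zero]
        rw [← h0]
        simp only [dotProduct]
        simp_rw [h4, Finset.mul_sum]
        rw [Finset.sum_comm]
        refine Finset.sum_congr rfl fun i _ => ?_
        rw [hstarq i, Finset.sum_mul, Finset.mul_sum]
        exact Finset.sum_congr rfl fun z _ => by simp only [Pi.star_apply]; ring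
      have key2 : ∀ i, p i * Complex.normSq (q i) = 0 := by
        have hre : ((∑ i, p i * Complex.normSq (q i) : ℝ) : ℂ) = 0 := by
          rw [Complex.ofReal_sum, ← key]
          refine Finset.sum_congr rfl fun i _ => ?_
          rw [Complex.ofReal_mul, Complex.normSq_eq_conj_mul_self, Complex.star_def]
        rw [Complex.ofReal_eq_zero] at hre
        intro i
        have hnn : ∀ j ∈ Finset.univ, 0 ≤ p j * Complex.normSq (q j) :=
          fun j _ => mul_nonneg (hp j) (Complex.normSq_nonneg _)
        exact (Finset.sum_eq_zero_iff_of_nonneg hnn).mp hre i (Finset.mem_univ i)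
      funext i
      have hq0 : q i.1 = 0 := by
        have := key2 i.1
        rcases mul_eq_zero.mp this with h | h
        · exact absurd h i.2
        · exact Complex.normSq_eq_zero.mp h
      show ∑ y, M i y * x y = 0
      exact hq0
    have h1 := LinearMap.finrank_range_add_finrank_ker ρ.mulVecLin
    have h2 := LinearMap.finrank_range_add_finrank_ker M.mulVecLin
    have h3 : finrank ℂ (LinearMap.ker ρ.mulVecLin) ≤ finrank ℂ (LinearMap.ker M.mulVecLin) :=
      Submodule.finrank_mono hker
    have hMrank : M.rank = finrank ℂ (span ℂ (Set.range WS)) := by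
      rw [← Matrix.rank_transpose M, Matrix.rank_eq_finrank_span_cols]
      rfl
    have hMr : M.rank = finrank ℂ (LinearMap.range M.mulVecLin) := rfl
    have hρr : ρ.rank = finrank ℂ (LinearMap.range ρ.mulVecLin) := rfl
    omega
  -- Step D : middle inequality
  have hmid : finrank ℂ (span ℂ (Set.range VS)) ≤ finrank ℂ (span ℂ (Set.range WS)) := by
    have := tensor_span_rank_le (fun i : S => fun x => star (u i.1 x)) VS hu0
    exact this
  omega
end

section
/- A maximally correlated state ρ = Σ_{i,j} c_{ij} |ii⟩⟨jj| is PPT (has positive semidefinite partial transpose) if and only if c_{ij} = 0 for all i ≠ j. -/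
open Matrix
open scoped ComplexOrder

/-- Partial transpose with respect to the second (B) factor. -/
def ptransposeB {a b : Type*} [Fintype a] [Fintype b]
    (ρ : Matrix (a × b) (a × b) ℂ) : Matrix (a × b) (a × b) ℂ :=
  fun p q => ρ (p.1, q.2) (q.1, p.2)

/-- The maximally correlated state ρ = Σ_{i,j} c_{ij} |ii⟩⟨jj|. -/
noncomputable def maxCorr {d : ℕ} (c : Matrix (Fin d) (Fin d) ℂ) :
    Matrix (Fin d × Fin d) (Fin d × Fin d) ℂ :=
  fun p q => if p.2 = p.1 ∧ q.2 = q.1 then c p.1 q.1 else 0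

lemma psd_entry_zero_of_diag_zero {n : Type*} [Fintype n] [DecidableEq n]
    {M : Matrix n n ℂ} (h : M.PosSemidef) {p q : n}
    (hp : M p p = 0) (hq : M q q = 0) : M p q = 0 := by
  set a := M p q with ha
  have hherm : M q p = star a := by
    rw [ha, ← h.1.apply]
  have key := h.dotProduct_mulVec_nonneg (Pi.single p 1 + Pi.single q (-star a))
  have hx : (star (Pi.single p 1 + Pi.single q (-star a))) ⬝ᵥ
      (M *ᵥ (Pi.single p 1 + Pi.single q (-star a)))
      = M p p + (-star a) * a + star (-star a) * M q p
        + star (-star a) * (-star a) * M q q := by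
    rw [mulVec_add, dotProduct_add, star_add]
    simp only [add_dotProduct]
    have hs : ∀ (r : n) (t : ℂ), star (Pi.single r t : n → ℂ) = Pi.single r (star t) := by
      intro r t
      ext k
      by_cases hk : k = r <;> simp [hk, Pi.single_apply]
    rw [hs, hs]
    simp [mulVec_single, dotProduct, Pi.single_apply, Finset.sum_ite_eq',
      mul_comm, mul_assoc, ha]
    ring
  rw [hx, hp, hq, hherm] at key
  simp only [star_neg, star_star, mul_zero, add_zero, zero_add] at key
  have key2 : (0:ℂ) ≤ -(2 * (star a * a)) := by
    convert key using 1; ring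
  have h3 : (0:ℂ) ≤ star a * a := star_mul_self_nonneg a
  have h4 : star a * a = 0 := by
    by_contra hne
    have : (0:ℂ) < star a * a := lt_of_le_of_ne h3 (Ne.symm hne)
    nlinarith [Complex.lt_def.mp this, Complex.le_def.mp key2]
  rcases mul_eq_zero.mp h4 with h5 | h5
  · exact star_eq_zero.mp h5
  · exact h5

/-- A maximally correlated state Σ_{i,j} c_{ij}|ii⟩⟨jj| is PPT if and only if all
off-diagonal entries of (c_{ij}) vanish. -/
theorem maxCorr_ppt_iff_diagonal {d : ℕ}
    (c : Matrix (Fin d) (Fin d) ℂ) (hc : c.PosSemidef) (htr : c.trace = 1) :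
    (ptransposeB (maxCorr c)).PosSemidef ↔ ∀ i j, i ≠ j → c i j = 0 := by
  constructor
  · intro h i j hij
    have hp : ptransposeB (maxCorr c) (i, j) (i, j) = 0 := by
      simp [ptransposeB, maxCorr, hij]
      intro hji; exact absurd hji.symm hij
    have hq : ptransposeB (maxCorr c) (j, i) (j, i) = 0 := by
      simp [ptransposeB, maxCorr, hij.symm]
      intro hji; exact absurd hji hij
    have := psd_entry_zero_of_diag_zero h hp hq
    simpa [ptransposeB, maxCorr] using this
  · intro h
    have hdiag : ∀ i, (0:ℂ) ≤ c i i := by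
      intro i
      have := hc.dotProduct_mulVec_nonneg (Pi.single i 1)
      simpa [dotProduct, mulVec_single, Pi.single_apply, Finset.sum_ite_eq'] using this
    have heq : ptransposeB (maxCorr c) =
        Matrix.diagonal (fun p : Fin d × Fin d => if p.2 = p.1 then c p.1 p.1 else 0) := by
      ext ⟨p1, p2⟩ ⟨q1, q2⟩
      simp only [ptransposeB, maxCorr, Matrix.diagonal_apply]
      by_cases hpq : (p1, p2) = (q1, q2)
      · obtain ⟨h1, h2⟩ := Prod.mk.injEq .. ▸ hpq
        subst h1; subst h2
        simp
      · simp only [hpq, if_neg hpq]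
        by_cases hcond : q2 = p1 ∧ p2 = q1
        · obtain ⟨h1, h2⟩ := hcond
          by_cases h3 : p1 = q1
          · exact absurd (by subst h3; subst h1; subst h2; rfl) hpq
          · simp [h1, h2, h p1 q1 h3]
        · simp [hcond]
      
    rw [heq]
    exact Matrix.PosSemidef.diagonal (fun p => by by_cases hp : p.2 = p.1 <;> simp [hp, hdiag])
end
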